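/- Let & be a continuous t-norm on [0,1] with residuation →, and let a be idempotent for &. Then for all b,c ∈ [0,1] with b < a ≤ c, one has c → b = b. -/
import Mathlib


noncomputable def tres (f : ℝ → ℝ → ℝ) (x y : ℝ) : ℝ :=
  sSup {z | z ∈ Set.Icc (0:ℝ) 1 ∧ f x z ≤ y}

def IsContTNorm (f : ℝ → ℝ → ℝ) : Prop :=
  (∀ a ∈ Set.Icc (0:ℝ) 1, ∀ b ∈ Set.Icc (0:ℝ) 1, f a b ∈ Set.Icc (0:ℝ) 1) ∧
  ContinuousOn (fun p : ℝ × ℝ => f p.1 p.2) (Set.Icc 0 1 ×ˢ Set.Icc 0 1) ∧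
  (∀ a ∈ Set.Icc (0:ℝ) 1, ∀ b ∈ Set.Icc (0:ℝ) 1, f a b = f b a) ∧
  (∀ a ∈ Set.Icc (0:ℝ) 1, ∀ b ∈ Set.Icc (0:ℝ) 1, ∀ c ∈ Set.Icc (0:ℝ) 1,
    f (f a b) c = f a (f b c)) ∧
  (∀ a ∈ Set.Icc (0:ℝ) 1, ∀ b ∈ Set.Icc (0:ℝ) 1, ∀ c ∈ Set.Icc (0:ℝ) 1,
    a ≤ b → f a c ≤ f b c) ∧
  (∀ a ∈ Set.Icc (0:ℝ) 1, f a 1 = a)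

/-- If `a` is idempotent then `f a z = z` for all `z ≤ a` in `[0,1]`. -/
lemma idem_absorb (f : ℝ → ℝ → ℝ) (ht : IsContTNorm f) (a : ℝ) (ha : a ∈ Set.Icc (0:ℝ) 1)
    (hid : f a a = a) (z : ℝ) (hz : z ∈ Set.Icc (0:ℝ) 1) (hza : z ≤ a) : f a z = z := by
  obtain ⟨hmem, hcont, hcomm, hassoc, hmono, hunit⟩ := ht
  have h01 : (1:ℝ) ∈ Set.Icc (0:ℝ) 1 := by constructor <;> norm_num
  -- f a 0 = 0
  have ha0 : f a 0 = 0 := by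
    have h0 : (0:ℝ) ∈ Set.Icc (0:ℝ) 1 := by constructor <;> norm_num
    have h1 : f a 0 ≤ f 1 0 := hmono a ha 1 h01 0 h0 ha.2
    have h2 : f 1 0 = 0 := by rw [hcomm 1 h01 0 h0, hunit 0 h0]
    have h3 : f a 0 ∈ Set.Icc (0:ℝ) 1 := hmem a ha 0 h0
    linarith [h3.1]
  -- continuity of w ↦ f a w on [0,1]
  have hc : ContinuousOn (fun w => f a w) (Set.Icc (0:ℝ) 1) := by
    have : ContinuousOn (fun w : ℝ => (fun p : ℝ × ℝ => f p.1 p.2) (a, w)) (Set.Icc (0:ℝ) 1) :=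
      hcont.comp (by fun_prop) (fun w hw => Set.mk_mem_prod ha hw)
    exact this
  have hsub : Set.Icc (0:ℝ) 0.1 ⊆ Set.Icc (0:ℝ) 1 := Set.Icc_subset_Icc le_rfl (by norm_num)
  have hc' : ContinuousOn (fun w => f a w) (Set.Icc (0:ℝ) a) :=
    hc.mono (Set.Icc_subset_Icc le_rfl ha.2)
  -- IVT : get w with f a w = z
  have hiv : z ∈ Set.Icc (f a 0) (f a a) := by
    rw [ha0, hid]; exact ⟨hz.1, hza⟩
  obtain ⟨w, hw, hfw0⟩ := intermediate_value_Icc ha.1 hc' hiv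
  have hfw : f a w = z := hfw0
  have hw01 : w ∈ Set.Icc (0:ℝ) 1 := ⟨hw.1, le_trans hw.2 ha.2⟩
  have : f a z = f a (f a w) := by rw [hfw]
  rw [this, ← hassoc a ha a ha w hw01, hid, hfw]

/-- if `a` is idempotent and `b < a ≤ c`, then `c → b = b`. -/
theorem stmt3 (f : ℝ → ℝ → ℝ) (ht : IsContTNorm f) (a : ℝ) (ha : a ∈ Set.Icc (0:ℝ) 1)
    (hid : f a a = a) :
    ∀ b ∈ Set.Icc (0:ℝ) 1, ∀ c ∈ Set.Icc (0:ℝ) 1, b < a → a ≤ c → tres f c b = b := by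
  intro b hb c hc hba hac
  obtain ⟨hmem, hcont, hcomm, hassoc, hmono, hunit⟩ := ht
  have h01 : (1:ℝ) ∈ Set.Icc (0:ℝ) 1 := by constructor <;> norm_num
  -- b is in the set
  have hbin : b ∈ {z | z ∈ Set.Icc (0:ℝ) 1 ∧ f c z ≤ b} := by
    refine ⟨hb, ?_⟩
    have h1 : f c b ≤ f 1 b := hmono c hc 1 h01 b hb hc.2
    have h2 : f 1 b = b := by rw [hcomm 1 h01 b hb, hunit b hb]
    linarith
  -- b is an upper bound
  have hub : ∀ z ∈ {z | z ∈ Set.Icc (0:ℝ) 1 ∧ f c z ≤ b}, z ≤ b := by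
    rintro z ⟨hz, hfz⟩
    by_contra h
    push_neg at h
    have haz : f a z ≤ f c z := hmono a ha c hc z hz hac
    rcases le_or_gt z a with hza | hza
    · have := idem_absorb f ⟨hmem, hcont, hcomm, hassoc, hmono, hunit⟩ a ha hid z hz hza
      linarith
    · have h1 : f a a ≤ f z a := hmono a ha z hz a ha hza.le
      have h2 : f z a = f a z := hcomm z hz a ha
      linarith [hid ▸ h1]
  -- conclude
  unfold tres
  exact le_antisymm (csSup_le ⟨b, hbin⟩ hub) (le_csSup ⟨b, hub⟩ hbin)
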